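/- (Geometric charging bound) Let m ≥ 1, and for i = 1,...,m let P_i > 0, L_i > 0 be reals, set R_i = ∑_{j=i}^m P_j, and φ_i = R_i L_i / P_i. Let α ≥ 1, and suppose a nondecreasing function F : ℝ≥0 → ℝ≥0 (interpreting F(τ) as the probability mass an optimal search can cover within length τ) satisfies, for every i, F(φ_i/(2α)) ≤ R_1 − R_i + R_i/2, i.e., at time φ_i/(2α) at least R_i/2 probability mass remains unsearched by the optimum. If the optimal cost is c* = ∫_0^∞ (1 − F(τ)) dτ (equivalently, the area of the staircase diagram), then ∑_{i=1}^m P_i φ_i ≤ 4α c*. -/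

import Mathlib

open Finset MeasureTheory in
/-- Geometric charging bound: if at time `φ i / (2α)` at least `R i / 2` of the
probability mass remains unsearched by the optimum, then
`∑ i, P i * φ i ≤ 4 α c*` where `c* = ∫_0^∞ (1 - F)`. -/
theorem stmt_5 (m : ℕ) (hm : 1 ≤ m) (P L R φ : Fin m → ℝ)
    (hP : ∀ i, 0 < P i) (hL : ∀ i, 0 < L i)
    (hR : ∀ i, R i = ∑ j ∈ univ.filter (fun j => i ≤ j), P j)
    (hRtot : ∑ j, P j = 1)
    (hφ : ∀ i, φ i = R i * L i / P i)
    (α : ℝ) (hα : 1 ≤ α)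
    (F : ℝ → ℝ) (hFmono : Monotone F) (hF0 : ∀ τ, 0 ≤ F τ) (hF1 : ∀ τ, F τ ≤ 1)
    (hFint : IntegrableOn (fun τ => 1 - F τ) (Set.Ioi (0 : ℝ)))
    (hFbound : ∀ i, F (φ i / (2 * α)) ≤ R ⟨0, hm⟩ - R i + R i / 2)
    (cstar : ℝ) (hcstar : cstar = ∫ τ in Set.Ioi (0 : ℝ), (1 - F τ)) :
    ∑ i, P i * φ i ≤ 4 * α * cstar := by
  have hα2 : (0:ℝ) < 2 * α := by linarith
  set t : Fin m → ℝ := fun i => φ i / (2 * α) with ht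
  have hRpos : ∀ i, 0 < R i := by
    intro i
    rw [hR]
    apply Finset.sum_pos (fun j _ => hP j)
    exact ⟨i, by simp⟩
  have hφpos : ∀ i, 0 < φ i := by
    intro i
    rw [hφ]
    exact div_pos (mul_pos (hRpos i) (hL i)) (hP i)
  have htpos : ∀ i, 0 < t i := fun i => div_pos (hφpos i) hα2
  have hR0 : R ⟨0, hm⟩ = 1 := by
    rw [hR, ← hRtot]
    apply Finset.sum_congr _ (fun _ _ => rfl)
    ext j
    simp [Fin.le_def]
  set g : ℝ → ℝ := fun τ => ∑ i, Set.indicator (Set.Ioc 0 (t i)) (fun _ => P i) τ with hg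
  have hgle : ∀ τ ∈ Set.Ioi (0:ℝ), g τ ≤ 2 * (1 - F τ) := by
    intro τ hτ
    simp only [Set.mem_Ioi] at hτ
    have hgτ : g τ = ∑ i ∈ univ.filter (fun i => τ ≤ t i), P i := by
      rw [hg, Finset.sum_filter]
      apply Finset.sum_congr rfl
      intro i _
      by_cases h : τ ≤ t i
      · simp [Set.indicator_of_mem, Set.mem_Ioc, hτ, h]
      · simp [Set.indicator_of_notMem, Set.mem_Ioc, h]
    rcases (univ.filter (fun i => τ ≤ t i)).eq_empty_or_nonempty with he | hne
    · rw [hgτ, he, Finset.sum_empty]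
      have := hF1 τ; linarith
    · set i0 := (univ.filter (fun i => τ ≤ t i)).min' hne with hi0
      have hi0mem := Finset.min'_mem _ hne
      have hτt : τ ≤ t i0 := (Finset.mem_filter.mp hi0mem).2
      have hsub : univ.filter (fun i => τ ≤ t i) ⊆ univ.filter (fun i => i0 ≤ i) := by
        intro j hj
        simp only [Finset.mem_filter, Finset.mem_univ, true_and] at hj ⊢
        exact Finset.min'_le _ j (by simp [hj])
      have h1 : g τ ≤ R i0 := by
        rw [hgτ, hR]
        exact Finset.sum_le_sum_of_subset_of_nonneg hsub (fun j _ _ => (hP j).le)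
      have h2 : F (t i0) ≤ 1 - R i0 / 2 := by
        have := hFbound i0
        rw [hR0] at this
        have : F (t i0) ≤ 1 - R i0 + R i0 / 2 := this
        linarith
      have h3 : F τ ≤ F (t i0) := hFmono hτt
      linarith
  have hgint : ∀ i : Fin m,
      IntegrableOn (Set.indicator (Set.Ioc 0 (t i)) (fun _ => P i)) (Set.Ioi (0:ℝ)) := by
    intro i
    apply Integrable.integrableOn
    rw [integrable_indicator_iff measurableSet_Ioc]
    exact (integrableOn_const_iff (C := P i)).mpr (Or.inr measure_Ioc_lt_top)
  have hGint : IntegrableOn g (Set.Ioi (0:ℝ)) :=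
    integrable_finset_sum _ (fun i _ => hgint i)
  have hint_g : ∫ τ in Set.Ioi (0:ℝ), g τ = ∑ i, P i * t i := by
    rw [integral_finset_sum _ (fun i _ => hgint i)]
    apply Finset.sum_congr rfl
    intro i _
    rw [setIntegral_indicator measurableSet_Ioc]
    have hinter : Set.Ioi (0:ℝ) ∩ Set.Ioc 0 (t i) = Set.Ioc 0 (t i) := by
      apply Set.inter_eq_self_of_subset_right
      exact Set.Ioc_subset_Ioi_self
    rw [hinter, setIntegral_const]
    simp [Real.volume_Ioc, ENNReal.toReal_ofReal (htpos i).le, (htpos i).le, mul_comm]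
  have hmain : ∑ i, P i * t i ≤ 2 * cstar := by
    rw [← hint_g, hcstar]
    have h2F : IntegrableOn (fun τ => 2 * (1 - F τ)) (Set.Ioi (0:ℝ)) := hFint.const_mul 2
    calc ∫ τ in Set.Ioi (0:ℝ), g τ ≤ ∫ τ in Set.Ioi (0:ℝ), 2 * (1 - F τ) :=
          setIntegral_mono_on hGint h2F measurableSet_Ioi hgle
      _ = 2 * ∫ τ in Set.Ioi (0:ℝ), (1 - F τ) := integral_const_mul 2 _
  have hsum : ∑ i, P i * φ i = 2 * α * ∑ i, P i * t i := by
    rw [Finset.mul_sum]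
    apply Finset.sum_congr rfl
    intro i _
    rw [ht]
    field_simp
  rw [hsum]
  nlinarith [mul_le_mul_of_nonneg_left hmain hα2.le]
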